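/- Let M ≥ 1, β ∈ (1, M+1], and let q = (q_0,…,q_M) be a probability vector with all q_k > 0, and let μ_q be the corresponding Bernoulli convolution. Let x ∈ [0, M/(β-1)] and suppose (a_i) ∈ {0,…,M}^ℕ satisfies Σ_{i=1}^∞ a_i/β^i = x and freq_k(a_i) = p_k for every k ∈ {0,…,M}. Then the upper local dimension of μ_q at x satisfies limsup_{r→0} log μ_q([x-r,x+r])/log r ≤ -Σ_{k=0}^M p_k log q_k / log β. -/

import Mathlib

open MeasureTheory Filter Finset
set_option maxHeartbeats 1000000

theorem div_aux {s y u v : ℝ} (hsy : s ≤ y) (hy : y ≤ 0) (huv : u ≤ v) (hv : v < 0) :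
    y / u ≤ s / v := by
  have hu : u < 0 := lt_of_le_of_lt huv hv
  rw [div_le_iff_of_neg hu, div_mul_eq_mul_div, div_le_iff_of_neg hv]
  nlinarith

theorem summ_aux (β : ℝ) (hβ : 1 < β) (M : ℕ) (b : ℕ → Fin (M+1)) :
    Summable (fun i : ℕ => ((b i : ℕ) : ℝ) / β ^ (i + 1)) := by
  have h0 : (0:ℝ) < β := by linarith
  have hgeo : Summable (fun i : ℕ => (M:ℝ) * (β⁻¹ ^ (i+1))) := by
    apply Summable.mul_left
    exact ((summable_geometric_of_lt_one (by positivity)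
      (by rw [inv_lt_one_iff₀]; right; exact hβ)).comp_injective Nat.succ_injective)
  apply Summable.of_nonneg_of_le (fun i => by positivity) ?_ hgeo
  intro i
  rw [div_eq_mul_inv, ← inv_pow]
  exact mul_le_mul_of_nonneg_right (by exact_mod_cast Fin.is_le (b i)) (by positivity)

theorem trap_aux (β : ℝ) (hβ : 1 < β) (M : ℕ) (b : ℕ → Fin (M+1)) (N : ℕ) :
    (∑' i : ℕ, ((b i : ℕ) : ℝ) / β ^ (i + 1)) ∈
      Set.Icc (∑ i ∈ range N, ((b i : ℕ) : ℝ) / β ^ (i + 1))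
        ((∑ i ∈ range N, ((b i : ℕ) : ℝ) / β ^ (i + 1)) + M / (β ^ N * (β - 1))) := by
  have h0 : (0:ℝ) < β := by linarith
  have hinv : β⁻¹ < 1 := by rw [inv_lt_one_iff₀]; right; exact hβ
  have hsum := summ_aux β hβ M b
  have hsplit := hsum.sum_add_tsum_nat_add N
  have htail0 : 0 ≤ ∑' i : ℕ, ((b (i + N) : ℕ) : ℝ) / β ^ (i + N + 1) :=
    tsum_nonneg fun i => by positivity
  have hgeo : Summable (fun i : ℕ => ((M:ℝ) / β ^ (N + 1)) * β⁻¹ ^ i) :=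
    Summable.mul_left _ (summable_geometric_of_lt_one (by positivity) hinv)
  have hterm : ∀ i : ℕ, ((b (i + N) : ℕ) : ℝ) / β ^ (i + N + 1)
      ≤ ((M:ℝ) / β ^ (N + 1)) * β⁻¹ ^ i := by
    intro i
    have hpowadd : β ^ (i + N + 1) = β ^ (N+1) * β ^ i := by
      rw [← pow_add]; congr 1; omega
    have h2 : ((b (i+N) : ℕ) : ℝ) ≤ M := by exact_mod_cast Fin.is_le (b (i+N))
    rw [inv_pow, ← div_eq_mul_inv, div_div, ← hpowadd]
    exact div_le_div_of_nonneg_right h2 (by positivity)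
  have htailM : (∑' i : ℕ, ((b (i + N) : ℕ) : ℝ) / β ^ (i + N + 1))
      ≤ M / (β ^ N * (β - 1)) := by
    refine le_trans (((summable_nat_add_iff N).2 hsum).tsum_le_tsum hterm hgeo) ?_
    rw [tsum_mul_left, tsum_geometric_of_lt_one (by positivity) hinv]
    have hb0 : β ≠ 0 := ne_of_gt h0
    have hb1 : β - 1 ≠ 0 := ne_of_gt (by linarith)
    have h1 : (1 - β⁻¹) = (β - 1)/β := by field_simp
    rw [h1, inv_div]
    have h2 : (M:ℝ)/β^(N+1) * (β/(β-1)) = M/(β^N*(β-1)) := by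
      rw [pow_succ]; field_simp
    rw [h2]
  constructor
  · rw [← hsplit]; linarith
  · rw [← hsplit]; linarith

theorem meas_aux (β : ℝ) (hβ : 1 < β) (M : ℕ) :
    Measurable (fun b : ℕ → Fin (M+1) => ∑' i : ℕ, ((b i : ℕ) : ℝ) / β ^ (i + 1)) := by
  apply measurable_of_tendsto_metrizable
    (f := fun N (b : ℕ → Fin (M+1)) => ∑ i ∈ range N, ((b i : ℕ) : ℝ) / β ^ (i + 1))
  · intro N
    apply Finset.measurable_sum
    intro i _
    exact (Measurable.of_discrete (f := fun v : Fin (M+1) => ((v:ℕ):ℝ) / β ^ (i+1))).comp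
      (measurable_pi_apply i)
  · rw [tendsto_pi_nhds]
    intro b
    exact (summ_aux β hβ M b).hasSum.tendsto_sum_nat

theorem upper_local_dimension_le (M : ℕ) (hM : 1 ≤ M) (β : ℝ)
    (hβ : β ∈ Set.Ioc (1 : ℝ) (M + 1))
    (q : Fin (M + 1) → ℝ) (hq0 : ∀ k, 0 < q k) (hq1 : ∑ k, q k = 1)
    (P : Measure (ℕ → Fin (M + 1))) [IsProbabilityMeasure P]
    (hP : ∀ (N : ℕ) (w : Fin N → Fin (M + 1)),
      (P {a | ∀ i : Fin N, a (i : ℕ) = w i}).toReal = ∏ i, q (w i))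
    (μ : Measure ℝ)
    (hμ : μ = P.map (fun a => ∑' i : ℕ, ((a i : ℕ) : ℝ) / β ^ (i + 1)))
    (x : ℝ) (hx : x ∈ Set.Icc (0 : ℝ) ((M : ℝ) / (β - 1)))
    (a : ℕ → Fin (M + 1))
    (hax : ∑' i : ℕ, ((a i : ℕ) : ℝ) / β ^ (i + 1) = x)
    (p : Fin (M + 1) → ℝ)
    (hfreq : ∀ k, Tendsto
      (fun N => (((Finset.range N).filter (fun i => a i = k)).card : ℝ) / N)
      atTop (nhds (p k))) :
    Filter.limsup
        (fun r => Real.log (μ (Set.Icc (x - r) (x + r))).toReal / Real.log r)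
        (nhdsWithin 0 (Set.Ioi 0)) ≤
      -∑ k, p k * Real.log (q k) / Real.log β := by
  classical
  obtain ⟨hβ1, hβ2⟩ := hβ
  have hβ0 : (0:ℝ) < β := lt_trans one_pos hβ1
  have hβm : (0:ℝ) < β - 1 := by linarith
  have hM0 : (0:ℝ) < M := by exact_mod_cast Nat.lt_of_lt_of_le Nat.zero_lt_one hM
  have hlogβ : 0 < Real.log β := Real.log_pos hβ1
  set g : (ℕ → Fin (M+1)) → ℝ := fun b => ∑' i : ℕ, ((b i : ℕ) : ℝ) / β ^ (i + 1) with hgdef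
  have hgmeas : Measurable g := meas_aux β hβ1 M
  have hprob : IsProbabilityMeasure μ := by
    rw [hμ]; exact Measure.isProbabilityMeasure_map hgmeas.aemeasurable
  -- the radii
  set r : ℕ → ℝ := fun N => (M:ℝ) / (β ^ N * (β - 1)) with hrdef
  have hrpos : ∀ N, 0 < r N := fun N => by positivity
  have hranti : ∀ {m n : ℕ}, m ≤ n → r n ≤ r m := by
    intro m n hmn
    apply div_le_div_of_nonneg_left (le_of_lt hM0) (by positivity)
    apply mul_le_mul_of_nonneg_right _ (le_of_lt hβm)
    exact pow_le_pow_right₀ (le_of_lt hβ1) hmn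
  have hr0 : Tendsto r atTop (nhds 0) := by
    rw [hrdef]
    have : Tendsto (fun N : ℕ => β ^ N * (β - 1)) atTop atTop :=
      (tendsto_pow_atTop_atTop_of_one_lt hβ1).atTop_mul_const hβm
    have h5 := this.inv_tendsto_atTop.const_mul (M:ℝ)
    simp only [mul_zero] at h5
    exact h5.congr fun N => (div_eq_mul_inv _ _).symm
  -- q_k ≤ 1 and log q_k ≤ 0
  have hq1' : ∀ k, q k ≤ 1 := by
    intro k
    rw [← hq1]
    exact Finset.single_le_sum (fun j _ => le_of_lt (hq0 j)) (Finset.mem_univ k)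
  have hlogq : ∀ k, Real.log (q k) ≤ 0 := fun k => Real.log_nonpos (le_of_lt (hq0 k)) (hq1' k)
  -- partial log sums
  set s : ℕ → ℝ := fun N => ∑ i ∈ range N, Real.log (q (a i)) with hsdef
  have hs0 : ∀ N, s N ≤ 0 := fun N => Finset.sum_nonpos fun i _ => hlogq (a i)
  -- cylinder measure bound
  have key : ∀ N : ℕ, ∏ i ∈ range N, q (a i) ≤ (μ (Set.Icc (x - r N) (x + r N))).toReal := by
    intro N
    rw [hμ, Measure.map_apply hgmeas measurableSet_Icc]
    have hsub : {b : ℕ → Fin (M+1) | ∀ i : Fin N, b (i:ℕ) = a (i:ℕ)} ⊆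
        (fun b => ∑' i : ℕ, ((b i : ℕ) : ℝ) / β ^ (i + 1)) ⁻¹' Set.Icc (x - r N) (x + r N) := by
      intro b hb
      have hbag : ∀ i ∈ range N, ((b i : ℕ) : ℝ) / β ^ (i + 1) = ((a i : ℕ) : ℝ) / β ^ (i + 1) := by
        intro i hi
        rw [hb ⟨i, Finset.mem_range.1 hi⟩]
      have htb := trap_aux β hβ1 M b N
      have hta := trap_aux β hβ1 M a N
      rw [hax] at hta
      rw [Finset.sum_congr rfl hbag] at htb
      simp only [Set.mem_preimage, Set.mem_Icc]
      obtain ⟨htb1, htb2⟩ := htb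
      obtain ⟨hta1, hta2⟩ := hta
      constructor
      · rw [hrdef]; dsimp only; linarith
      · rw [hrdef]; dsimp only; linarith
    have hcyl : (P {b : ℕ → Fin (M+1) | ∀ i : Fin N, b (i:ℕ) = a (i:ℕ)}).toReal
        = ∏ i ∈ range N, q (a i) := by
      rw [hP N (fun i : Fin N => a (i:ℕ))]
      exact Fin.prod_univ_eq_prod_range (fun i => q (a i)) N
    rw [← hcyl]
    exact ENNReal.toReal_mono (measure_ne_top P _) (measure_mono hsub)
  -- frequency limit for log sums
  have hAfib : ∀ N : ℕ, s N = ∑ k, (((range N).filter (fun i => a i = k)).card : ℝ) * Real.log (q k) := by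
    intro N
    rw [hsdef]
    dsimp only
    rw [← Finset.sum_fiberwise (range N) (fun i => a i) (fun i => Real.log (q (a i)))]
    refine Finset.sum_congr rfl fun k _ => ?_
    have hterm : ∀ i ∈ (range N).filter (fun i => a i = k),
        Real.log (q (a i)) = Real.log (q k) := fun i hi => by
      rw [(Finset.mem_filter.1 hi).2]
    rw [Finset.sum_congr rfl hterm, Finset.sum_const, nsmul_eq_mul]
  have hA : Tendsto (fun N : ℕ => s N / N) atTop (nhds (∑ k, p k * Real.log (q k))) := by
    have : ∀ N : ℕ, s N / N = ∑ k, ((((range N).filter (fun i => a i = k)).card : ℝ) / N) * Real.log (q k) := by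
      intro N
      rw [hAfib N, Finset.sum_div]
      exact Finset.sum_congr rfl fun k _ => by ring
    rw [funext this]
    exact tendsto_finset_sum _ fun k _ => (hfreq k).mul_const _
  -- log r N
  have hlogr : ∀ N : ℕ, Real.log (r N) = Real.log M - ((N:ℝ) * Real.log β + Real.log (β - 1)) := by
    intro N
    rw [hrdef]
    dsimp only
    rw [Real.log_div (ne_of_gt hM0) (by positivity), Real.log_mul (by positivity) (ne_of_gt hβm),
      Real.log_pow]
  -- the comparison sequence h and its limit
  set L : ℝ := -∑ k, p k * Real.log (q k) / Real.log β with hLdef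
  set h : ℕ → ℝ := fun N => s (N + 1) / Real.log (r N) with hhdef
  have hhlim : Tendsto h atTop (nhds L) := by
    have h1 : Tendsto (fun N : ℕ => Real.log (r N) / ((N:ℝ) + 1)) atTop (nhds (-Real.log β)) := by
      have heq : ∀ N : ℕ, Real.log (r N) / ((N:ℝ) + 1)
          = (Real.log M - Real.log (β - 1) + Real.log β) * (((N:ℝ) + 1)⁻¹) - Real.log β := by
        intro N
        rw [hlogr N]
        have hN1 : ((N:ℝ) + 1) ≠ 0 := by positivity
        field_simp
        ring
      rw [funext heq]
      have := (tendsto_one_div_add_atTop_nhds_zero_nat).const_mul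
        (Real.log M - Real.log (β - 1) + Real.log β)
      simp only [mul_one_div] at this
      have h2 : Tendsto (fun N : ℕ => (Real.log M - Real.log (β - 1) + Real.log β) * (((N:ℝ) + 1)⁻¹))
          atTop (nhds 0) := by
        simpa [div_eq_mul_inv, mul_comm] using this
      simpa using h2.sub_const (Real.log β)
    have h2 : Tendsto (fun N : ℕ => ((N:ℝ) + 1) / Real.log (r N)) atTop (nhds (-Real.log β)⁻¹) := by
      have := h1.inv₀ (by simp [ne_of_lt (neg_neg_iff_pos.2 hlogβ)])
      refine this.congr fun N => ?_
      rw [inv_div]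
    have h3 : Tendsto (fun N : ℕ => s (N + 1) / (((N:ℕ):ℝ) + 1)) atTop
        (nhds (∑ k, p k * Real.log (q k))) := by
      have := hA.comp (tendsto_add_atTop_nat 1)
      refine this.congr fun N => ?_
      simp only [Function.comp]
      push_cast
      ring_nf
    have h4 := h3.mul h2
    have heq : ∀ N : ℕ, s (N + 1) / (((N:ℕ):ℝ) + 1) * (((N:ℝ) + 1) / Real.log (r N)) = h N := by
      intro N
      rw [hhdef]
      dsimp only
      rw [div_mul_div_comm, mul_comm (s (N+1)) _, mul_div_mul_left _ _ (by positivity : ((N:ℝ)+1) ≠ 0)]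
    rw [funext heq] at h4
    have hv : (∑ k, p k * Real.log (q k)) * (-Real.log β)⁻¹
        = -∑ k, p k * Real.log (q k) / Real.log β := by
      rw [← Finset.sum_div, ← neg_inv, mul_neg, ← div_eq_mul_inv]
    rw [hLdef, ← hv]
    exact h4
  -- index function: first N with r N ≤ t
  set Nf : ℝ → ℕ := fun t => sInf {N | r N ≤ t} with hNfdef
  have hNe : ∀ t : ℝ, 0 < t → {N | r N ≤ t}.Nonempty := by
    intro t ht
    obtain ⟨N, hN⟩ := (hr0.eventually_lt_const ht).exists
    exact ⟨N, le_of_lt hN⟩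
  have hNf1 : ∀ t : ℝ, 0 < t → r (Nf t) ≤ t := fun t ht => Nat.sInf_mem (hNe t ht)
  have hNf2 : ∀ (t : ℝ), ∀ n, n < Nf t → t < r n := fun t n hn =>
    lt_of_not_ge (Nat.notMem_of_lt_sInf hn)
  have hNftop : Tendsto Nf (nhdsWithin 0 (Set.Ioi 0)) atTop := by
    rw [tendsto_atTop]
    intro K
    filter_upwards [Ioo_mem_nhdsGT (hrpos K)] with t ht
    by_contra hcon
    push_neg at hcon
    have h1 := hNf1 t ht.1
    have h2 : r K ≤ r (Nf t) := hranti (le_of_lt hcon)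
    have h3 := ht.2
    linarith
  obtain ⟨N₀, hN₀⟩ := (hr0.eventually_lt_const one_pos).exists
  -- log of measure is ≤ 0
  have hup : ∀ t : ℝ, Real.log (μ (Set.Icc (x - t) (x + t))).toReal ≤ 0 := by
    intro t
    apply Real.log_nonpos ENNReal.toReal_nonneg
    have h1 : (μ (Set.Icc (x - t) (x + t))).toReal ≤ (1 : ENNReal).toReal :=
      ENNReal.toReal_mono ENNReal.one_ne_top prob_le_one
    simpa using h1
  -- the eventual bound
  have hev : ∀ᶠ t in nhdsWithin 0 (Set.Ioi 0),
      Real.log (μ (Set.Icc (x - t) (x + t))).toReal / Real.log t ≤ h (Nf t - 1) := by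
    have hev1 : ∀ᶠ t in nhdsWithin (0:ℝ) (Set.Ioi 0), N₀ + 1 ≤ Nf t :=
      hNftop.eventually_ge_atTop (N₀ + 1)
    have hev2 : ∀ᶠ t in nhdsWithin (0:ℝ) (Set.Ioi 0), t ∈ Set.Ioo (0:ℝ) 1 :=
      Ioo_mem_nhdsGT one_pos
    filter_upwards [hev1, hev2] with t hN ht
    obtain ⟨ht0, ht1⟩ := ht
    have hmN : Nf t = (Nf t - 1) + 1 := by omega
    set m := Nf t - 1 with hm
    have hmge : N₀ ≤ m := by omega
    have hrm1 : r m < 1 := lt_of_le_of_lt (hranti hmge) hN₀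
    have htrm : t < r m := hNf2 t m (by omega)
    have hrt : r (m + 1) ≤ t := by rw [← hmN]; exact hNf1 t ht0
    have hmono : (μ (Set.Icc (x - r (m+1)) (x + r (m+1)))).toReal
        ≤ (μ (Set.Icc (x - t) (x + t))).toReal := by
      apply ENNReal.toReal_mono (measure_ne_top μ _)
      apply measure_mono
      apply Set.Icc_subset_Icc <;> linarith
    have hprod : (0:ℝ) < ∏ i ∈ range (m+1), q (a i) :=
      Finset.prod_pos fun i _ => hq0 (a i)
    have hlow : s (m+1) ≤ Real.log (μ (Set.Icc (x - t) (x + t))).toReal := by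
      have hkm := (key (m+1)).trans hmono
      calc s (m+1) = Real.log (∏ i ∈ range (m+1), q (a i)) :=
            (Real.log_prod fun i _ => ne_of_gt (hq0 (a i))).symm
        _ ≤ _ := Real.log_le_log hprod hkm
    have hlt : Real.log t < 0 := Real.log_neg ht0 ht1
    have hlrm : Real.log (r m) < 0 := Real.log_neg (hrpos m) hrm1
    have hle : Real.log t ≤ Real.log (r m) := Real.log_le_log ht0 (le_of_lt htrm)
    exact div_aux hlow (hup t) hle hlrm
  -- conclude
  have hcomp : Tendsto (fun t => h (Nf t - 1)) (nhdsWithin 0 (Set.Ioi 0)) (nhds L) := by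
    have := hhlim.comp ((tendsto_sub_atTop_nat 1).comp hNftop)
    exact this
  have hFnn : ∀ᶠ t in nhdsWithin (0:ℝ) (Set.Ioi 0),
      (0:ℝ) ≤ Real.log (μ (Set.Icc (x - t) (x + t))).toReal / Real.log t := by
    filter_upwards [Ioo_mem_nhdsGT one_pos] with t ht
    exact div_nonneg_of_nonpos (hup t) (le_of_lt (Real.log_neg ht.1 ht.2))
  refine le_trans (limsup_le_limsup hev (isCoboundedUnder_le_of_eventually_le _ hFnn)
    hcomp.isBoundedUnder_le) ?_
  exact le_of_eq hcomp.limsup_eq
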